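/- Let (E,ℒ,𝒜) be a weakly left-resolving, normal labelled space. Let s = (μ,A,ν) and t = (β,B,γ) be two nonzero elements of S and let φ be a tight character of E(S) with associated filter ξ^α. Suppose (s,φ), (t,φ) ∈ Ω and that ν is a beginning of γ, say γ = νγ'. Then (s,φ) ∼ (t,φ) if and only if β = μγ'. -/

import Mathlib

open Classical

universe u v w

/-! ## Words over an alphabet -/

/-- Finite-or-infinite words over the alphabet `A`: `Sum.inl l` is the finite word `l`
(with `[]` playing the role of the empty word `ω`), and `Sum.inr f` is the infinite word `f`. -/
abbrev Word (A : Type w) := List A ⊕ (ℕ → A)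

/-- The length `|α| ∈ ℕ∞` of a word. -/
def wlength {A : Type w} : Word A → ℕ∞ :=
  Sum.elim (fun l => (l.length : ℕ∞)) fun _ => ⊤

/-- The finite prefix `α_{1,n}` of a word `α`. -/
def wprefix {A : Type w} : Word A → ℕ → List A :=
  Sum.elim (fun l n => l.take n) fun f n => List.ofFn fun i : Fin n => f i

/-- Concatenation `αβ` of a finite word `α` with a word `β`. -/
def wappend {A : Type w} (α : List A) : Word A → Word A :=
  Sum.elim (fun l => Sum.inl (α ++ l)) fun f =>
    Sum.inr fun n => if h : n < α.length then α.get ⟨n, h⟩ else f (n - α.length)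

/-- `β` is a beginning (finite prefix) of the word `α`. -/
def WPrefix {A : Type w} (β : List A) : Word A → Prop :=
  Sum.elim (fun l => β <+: l) fun f => β = List.ofFn fun i : Fin β.length => f i

/-! ## Triples -/

/-- Formal triples `(α, X, β)` together with a zero element; the inverse semigroup `S`
of a labelled space consists of such elements. -/
inductive Tr (V : Type u) (A : Type w) where
  | zero : Tr V A
  | mk : List A → Set V → List A → Tr V A

/-- The involution `(α,A,β)* = (β,A,α)` (fixing `0`). -/
def Tr.tstar {V : Type u} {A : Type w} : Tr V A → Tr V A
  | .zero => .zero
  | .mk α X β => .mk β X α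

/-! ## Labelled spaces -/

/-- The data of a labelled space `(E, ℒ, 𝒜)`: a directed graph on nonempty vertex/edge
sets, a surjective labelling map onto the alphabet `A`, and a family `𝒜` of subsets
of the vertex set. -/
structure LblSp (V : Type u) (E : Type v) (A : Type w) where
  src : E → V
  rng : E → V
  lab : E → A
  lab_surj : Function.Surjective lab
  nonempty_V : Nonempty V
  nonempty_E : Nonempty E
  𝒜 : Set (Set V)

namespace LblSp

variable {V : Type u} {Ed : Type v} {A : Type w} (Λ : LblSp V Ed A)

/-- `α ≠ ω` is the label of some finite path of the graph. -/
def IsPathLabel (α : List A) : Prop :=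
  ∃ l : List Ed, l ≠ [] ∧ List.Chain' (fun e f => Λ.rng e = Λ.src f) l ∧ l.map Λ.lab = α

/-- `ℒ^*`: the finite labelled paths, together with the empty word. -/
def LStar : Set (List A) := {α | α = [] ∨ Λ.IsPathLabel α}

/-- `ℒ^∞`: the infinite labelled paths. -/
def LInfty : Set (ℕ → A) :=
  {f | ∃ e : ℕ → Ed, (∀ n, Λ.rng (e n) = Λ.src (e (n + 1))) ∧ ∀ n, Λ.lab (e n) = f n}

/-- `ℒ^{≤∞} = ℒ^* ∪ ℒ^∞`, as a predicate on `Word A`. -/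
def IsWordW : Word A → Prop := Sum.elim (· ∈ Λ.LStar) (· ∈ Λ.LInfty)

/-- The relative range `r(X, α)` (with `r(X, ω) = X`). -/
noncomputable def relRange (X : Set V) (α : List A) : Set V :=
  if α = [] then X
  else {v | ∃ (l : List Ed) (h : l ≠ []), List.Chain' (fun e f => Λ.rng e = Λ.src f) l ∧
        l.map Λ.lab = α ∧ Λ.src (l.head h) ∈ X ∧ Λ.rng (l.getLast h) = v}

/-- The range `r(α) = r(E⁰, α)`. -/
noncomputable def rangeL (α : List A) : Set V := Λ.relRange Set.univ α

/-- `𝒜^α = {X ∈ 𝒜 : X ⊆ r(α)}`. -/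
noncomputable def Aset (α : List A) : Set (Set V) := {X | X ∈ Λ.𝒜 ∧ X ⊆ Λ.rangeL α}

/-- `(E, ℒ, 𝒜)` is a labelled space: `𝒜` is closed under finite intersections and
unions, contains all ranges `r(α)` for `α ∈ ℒ^{≥1}`, and is closed under relative ranges. -/
structure IsLS : Prop where
  inter_mem : ∀ X ∈ Λ.𝒜, ∀ Y ∈ Λ.𝒜, X ∩ Y ∈ Λ.𝒜
  union_mem : ∀ X ∈ Λ.𝒜, ∀ Y ∈ Λ.𝒜, X ∪ Y ∈ Λ.𝒜
  range_mem : ∀ α ∈ Λ.LStar, α ≠ [] → Λ.rangeL α ∈ Λ.𝒜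
  relRange_mem : ∀ X ∈ Λ.𝒜, ∀ α ∈ Λ.LStar, Λ.relRange X α ∈ Λ.𝒜

/-- A weakly left-resolving labelled space. -/
structure IsWLR : Prop where
  toIsLS : Λ.IsLS
  wlr : ∀ X ∈ Λ.𝒜, ∀ Y ∈ Λ.𝒜, ∀ α ∈ Λ.LStar, α ≠ [] →
    Λ.relRange (X ∩ Y) α = Λ.relRange X α ∩ Λ.relRange Y α

/-- A weakly left-resolving normal labelled space. -/
structure IsNormal : Prop where
  toIsWLR : Λ.IsWLR
  sdiff_mem : ∀ X ∈ Λ.𝒜, ∀ Y ∈ Λ.𝒜, X \ Y ∈ Λ.𝒜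

/-! ## The inverse semigroup `S` -/

/-- The underlying set of the inverse semigroup
`S = {(α,A,β) : α, β ∈ ℒ^*, A ∈ 𝒜^α ∩ 𝒜^β, A ≠ ∅} ∪ {0}`. -/
def SSet : Set (Tr V A) :=
  {t | t = Tr.zero ∨ ∃ α X β, t = Tr.mk α X β ∧ α ∈ Λ.LStar ∧ β ∈ Λ.LStar ∧
    X ∈ Λ.Aset α ∧ X ∈ Λ.Aset β ∧ X.Nonempty}

/-- The semilattice of idempotents `E(S) = {(α,A,α)} ∪ {0}`. -/
def ESet : Set (Tr V A) :=
  {t | t = Tr.zero ∨ ∃ α X, t = Tr.mk α X α ∧ α ∈ Λ.LStar ∧ X ∈ Λ.Aset α ∧ X.Nonempty}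

/-- The product of `S`. -/
noncomputable def tmul : Tr V A → Tr V A → Tr V A
  | Tr.zero, _ => Tr.zero
  | Tr.mk _ _ _, Tr.zero => Tr.zero
  | Tr.mk α X β, Tr.mk γ Y δ =>
    if β <+: γ ∧ (Λ.relRange X (γ.drop β.length) ∩ Y).Nonempty then
      Tr.mk (α ++ γ.drop β.length) (Λ.relRange X (γ.drop β.length) ∩ Y) δ
    else if γ <+: β ∧ (X ∩ Λ.relRange Y (β.drop γ.length)).Nonempty then
      Tr.mk α (X ∩ Λ.relRange Y (β.drop γ.length)) (δ ++ β.drop γ.length)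
    else Tr.zero

/-! ## Filters in `E(S)`, characters, and the tight spectrum -/

/-- A filter in `E(S)`: a nonempty subset of `E(S) ∖ {0}` closed under products and
upward closed in the natural order (`p ≤ q ↔ pq = p`). -/
def IsFilterES (ξ : Set (Tr V A)) : Prop :=
  ξ.Nonempty ∧ (∀ t ∈ ξ, t ∈ Λ.ESet ∧ t ≠ Tr.zero) ∧
  (∀ p ∈ ξ, ∀ q ∈ ξ, Λ.tmul p q ∈ ξ) ∧
  (∀ p ∈ ξ, ∀ q ∈ Λ.ESet, Λ.tmul p q = p → q ∈ ξ)

/-- An ultrafilter in `E(S)`. -/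
def IsUltraES (ξ : Set (Tr V A)) : Prop :=
  Λ.IsFilterES ξ ∧ ∀ ζ, Λ.IsFilterES ζ → ξ ⊆ ζ → ξ = ζ

/-- The character (indicator function) of a filter. -/
noncomputable def charOf (_Λ : LblSp V Ed A) (ξ : Set (Tr V A)) : Tr V A → Bool :=
  fun t => if t ∈ ξ then true else false

/-- A character of `E(S)`: a nonzero, zero- and meet-preserving `{0,1}`-valued map on
`E(S)` (encoded as a map on triples vanishing outside `E(S)`). -/
def IsChar (φ : Tr V A → Bool) : Prop :=
  (∃ e, φ e = true) ∧ (∀ e, e ∉ Λ.ESet → φ e = false) ∧ φ Tr.zero = false ∧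
  ∀ e ∈ Λ.ESet, ∀ f ∈ Λ.ESet, φ (Λ.tmul e f) = (φ e && φ f)

/-- The tight spectrum `Ê_tight`: the closure, within the space of characters with the
topology of pointwise convergence, of the set of characters of ultrafilters. -/
def tightSpectrum : Set (Tr V A → Bool) :=
  {φ | Λ.IsChar φ} ∩ closure {φ | ∃ ξ, Λ.IsUltraES ξ ∧ φ = Λ.charOf ξ}

/-- A tight filter: a filter whose character lies in the tight spectrum. -/
def IsTightFilter (ξ : Set (Tr V A)) : Prop :=
  Λ.IsFilterES ξ ∧ Λ.charOf ξ ∈ Λ.tightSpectrum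

/-- `ξ_{|β|} = {B : (β, B, β) ∈ ξ}`, the filter of `ξ` at level `β`. -/
def filterAt (_Λ : LblSp V Ed A) (ξ : Set (Tr V A)) (β : List A) : Set (Set V) :=
  {B | Tr.mk β B β ∈ ξ}

/-- `α` is the word associated with the filter `ξ` (i.e. `ξ = ξ^α`): the nonempty finite
beginnings of `α` are exactly the words appearing in elements of `ξ`. -/
def HasWord (_Λ : LblSp V Ed A) (ξ : Set (Tr V A)) (α : Word A) : Prop :=
  ∀ β : List A, β ≠ [] → ((∃ B, Tr.mk β B β ∈ ξ) ↔ WPrefix β α)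

/-! ## Filters and ultrafilters in `𝒜^β` -/

/-- A filter in the Boolean algebra `𝒜^β`. -/
def IsFilterAset (β : List A) (F : Set (Set V)) : Prop :=
  F.Nonempty ∧ F ⊆ Λ.Aset β ∧ (∀ X ∈ F, X.Nonempty) ∧
  (∀ X ∈ F, ∀ Y ∈ F, X ∩ Y ∈ F) ∧ (∀ X ∈ F, ∀ Y ∈ Λ.Aset β, X ⊆ Y → Y ∈ F)

/-- An ultrafilter in `𝒜^β` (an element of `X_β`). -/
def IsUltraAset (β : List A) (F : Set (Set V)) : Prop :=
  Λ.IsFilterAset β F ∧ ∀ G, Λ.IsFilterAset β G → F ⊆ G → F = G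

/-- The gluing map `g_{(α)β}(F) = {C ∩ r(αβ) : C ∈ F}` on ultrafilters. -/
noncomputable def gmap (α β : List A) (F : Set (Set V)) : Set (Set V) :=
  {X | ∃ C ∈ F, X = C ∩ Λ.rangeL (α ++ β)}

/-- The cutting map `h_{[α]β}(F) = {C ∈ 𝒜^β : D ⊆ C for some D ∈ F}` on ultrafilters. -/
noncomputable def hmap (α β : List A) (F : Set (Set V)) : Set (Set V) :=
  {C | C ∈ Λ.Aset β ∧ ∃ D ∈ F, D ⊆ C}

/-! ## Cutting and gluing of (tight) filters in `E(S)` -/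

/-- The cutting map `H_{[α]β} : T^{αβ} → T^{(α)β}` (word-free formulation): the filter
whose family is `η_n = h_{[α]β_{1,n}}(ξ_{n+|α|})`; `H_{[ω]β}` is the identity. -/
noncomputable def Hcut (α : List A) (ξ : Set (Tr V A)) : Set (Tr V A) :=
  if α = [] then ξ
  else {t | ∃ δ B, t = Tr.mk δ B δ ∧ B ∈ Λ.Aset δ ∧
        ∃ D, Tr.mk (α ++ δ) D (α ++ δ) ∈ ξ ∧ D ⊆ B}

/-- The gluing map `G_{(α)β} : T^{(α)β} → T^{αβ}` (word-free formulation): the filter with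
family `η_{|α|+n} = g_{(α)β_{1,n}}(ξ_n)` for `n ≥ 1` and `η_i = f_{α_{1,i}[…]}(…)` for
`i ≤ |α|`, with the two cases according to whether the word of `ξ` is empty (`β = ω`)
or not; `G_{(ω)β}` is the identity. -/
noncomputable def Gglue (α : List A) (ξ : Set (Tr V A)) : Set (Tr V A) :=
  if α = [] then ξ
  else if ∃ (δ : List A) (B : Set V), δ ≠ [] ∧ Tr.mk δ B δ ∈ ξ then
    {t | ∃ δ B, t = Tr.mk δ B δ ∧
      ((α <+: δ ∧ α ≠ δ ∧ ∃ C, Tr.mk (δ.drop α.length) C (δ.drop α.length) ∈ ξ ∧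
          B = C ∩ Λ.rangeL δ) ∨
       (δ <+: α ∧ B ∈ Λ.Aset δ ∧ ∃ (b : A) (C : Set V), Tr.mk [b] C [b] ∈ ξ ∧
          Λ.relRange B (α.drop δ.length ++ [b]) = C ∩ Λ.rangeL (α ++ [b])))}
  else
    {t | ∃ δ B, t = Tr.mk δ B δ ∧ δ <+: α ∧ B ∈ Λ.Aset δ ∧
      ∃ C, Tr.mk [] C [] ∈ ξ ∧ Λ.relRange B (α.drop δ.length) = C ∩ Λ.rangeL α}

/-- `T^β`: the set of tight filters with associated word `β`. -/
def TWord (β : Word A) : Set (Set (Tr V A)) :=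
  {ξ | Λ.IsTightFilter ξ ∧ Λ.HasWord ξ β}

/-- `T^{(α)β} = {ξ ∈ T^β : r(α) ∈ ξ_0}` (equal to `T^β` when `α = ω`), the domain of the
gluing map `G_{(α)β}`. -/
def TGlueDom (α : List A) (β : Word A) : Set (Set (Tr V A)) :=
  {ξ | Λ.IsTightFilter ξ ∧ Λ.HasWord ξ β ∧ (α ≠ [] → Tr.mk [] (Λ.rangeL α) [] ∈ ξ)}

/-! ## The groupoid `Γ` -/

/-- The defining relation of
`Γ = {(ξ^{aγ}, |a|-|b|, η^{bγ}) ∈ T × ℤ × T : H_{[a]γ}(ξ^{aγ}) = H_{[b]γ}(η^{bγ})}`. -/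
def InGamma (η : Set (Tr V A)) (m : ℤ) (ξ : Set (Tr V A)) : Prop :=
  ∃ (a b : List A) (γ : Word A), a ∈ Λ.LStar ∧ b ∈ Λ.LStar ∧ Λ.IsWordW γ ∧
    η ∈ Λ.TWord (wappend a γ) ∧ ξ ∈ Λ.TWord (wappend b γ) ∧
    m = (a.length : ℤ) - (b.length : ℤ) ∧ Λ.Hcut a η = Λ.Hcut b ξ

/-- `Γ` as a set of raw triples. -/
def GammaRaw : Set (Set (Tr V A) × ℤ × Set (Tr V A)) :=
  {p | Λ.InGamma p.1 p.2.1 p.2.2}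

/-- The basic set `Z_{s,e:e₁,…,eₙ}` of `Γ` (raw version), for `s = (μ, X, ν)`:
triples `(η^{μγ}, |μ|-|ν|, ξ^{νγ}) ∈ Γ` with `e ∈ ξ`, `eᵢ ∉ ξ` and
`H_{[μ]γ}(η) = H_{[ν]γ}(ξ)`. -/
noncomputable def ZrawGen (μ ν : List A) (e : Tr V A) (es : List (Tr V A)) :
    Set (Set (Tr V A) × ℤ × Set (Tr V A)) :=
  {p | Λ.InGamma p.1 p.2.1 p.2.2 ∧ p.2.1 = (μ.length : ℤ) - (ν.length : ℤ) ∧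
       e ∈ p.2.2 ∧ (∀ f ∈ es, f ∉ p.2.2) ∧
       ∃ γ : Word A, Λ.HasWord p.1 (wappend μ γ) ∧ Λ.HasWord p.2.2 (wappend ν γ) ∧
         Λ.Hcut μ p.1 = Λ.Hcut ν p.2.2}

/-- `Z_s = Z_{s, s*s}` for `s = (μ, X, ν)` (raw version). -/
noncomputable def Zraw (μ : List A) (X : Set V) (ν : List A) :
    Set (Set (Tr V A) × ℤ × Set (Tr V A)) :=
  Λ.ZrawGen μ ν (Tr.mk ν X ν) []

/-- The basic set `V_{e:e₁,…,eₙ} = U_{e:e₁,…,eₙ} ∩ T` of the tight filter space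
(raw version). -/
def VrawGen (e : Tr V A) (es : List (Tr V A)) : Set (Set (Tr V A)) :=
  {ξ | Λ.IsTightFilter ξ ∧ e ∈ ξ ∧ ∀ f ∈ es, f ∉ ξ}

/-- The shift map `σ : T^{(1)} → T`, `σ(ξ^{aγ}) = H_{[a]γ}(ξ^{aγ})` (extended by the
identity off its domain). -/
noncomputable def sigmaMap (ξ : Set (Tr V A)) : Set (Tr V A) :=
  if h : ∃ a : A, ∃ B : Set V, Tr.mk [a] B [a] ∈ ξ then Λ.Hcut [h.choose] ξ else ξ

/-- The Renault–Deaconu basic set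
`𝒱(X, Y, m, n) = {(η, m-n, ξ) ∈ Γ : (η, ξ) ∈ X × Y, σ^m(η) = σ^n(ξ)}` (raw version). -/
noncomputable def VrdRaw (Xs Ys : Set (Set (Tr V A))) (m n : ℕ) :
    Set (Set (Tr V A) × ℤ × Set (Tr V A)) :=
  {p | Λ.InGamma p.1 p.2.1 p.2.2 ∧ p.2.1 = (m : ℤ) - (n : ℤ) ∧
       p.1 ∈ Xs ∧ p.2.2 ∈ Ys ∧ (Λ.sigmaMap)^[m] p.1 = (Λ.sigmaMap)^[n] p.2.2}

/-! ## The groupoid of germs `𝒢_tight` -/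

/-- The action `θ_s(φ)(e) = φ(s* e s)` of `S` on characters. -/
noncomputable def theta (s : Tr V A) (φ : Tr V A → Bool) : Tr V A → Bool :=
  fun e => if e ∈ Λ.ESet then φ (Λ.tmul (Λ.tmul (Tr.tstar s) e) s) else false

/-- `Ω = {(s, φ) ∈ S × Ê_tight : φ ∈ D_{s*s}}`. -/
noncomputable def Omega : Set (Tr V A × (Tr V A → Bool)) :=
  {p | p.1 ∈ Λ.SSet ∧ p.2 ∈ Λ.tightSpectrum ∧ p.2 (Λ.tmul (Tr.tstar p.1) p.1) = true}

/-- The germ equivalence relation on `Ω`: `(s,φ) ∼ (t,ψ)` iff `φ = ψ` and there is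
`e ∈ E(S)` with `φ(e) = 1` and `se = te`. -/
noncomputable def germEquiv (p q : Tr V A × (Tr V A → Bool)) : Prop :=
  p.2 = q.2 ∧ ∃ e ∈ Λ.ESet, p.2 e = true ∧ Λ.tmul p.1 e = Λ.tmul q.1 e

/-- The map `Φ` at the level of `Ω`: for `t = (β, X, γ)` and `φ` with filter `ξ^α`
(where `α = γα'`), `Φ[t,φ] = ((G_{(β)α'} ∘ H_{[γ]α'})(ξ^α), |β|-|γ|, ξ^α)`. -/
noncomputable def PhiRaw : Tr V A → (Tr V A → Bool) → Set (Tr V A) × ℤ × Set (Tr V A)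
  | Tr.zero, _ => (∅, 0, ∅)
  | Tr.mk β _ γ, φ =>
      (Λ.Gglue β (Λ.Hcut γ {e | φ e = true}), (β.length : ℤ) - (γ.length : ℤ),
        {e | φ e = true})

/-! ## Miscellaneous notions -/

/-- `ℒ(XE¹) = {ℒ(e) : e ∈ E¹, s(e) ∈ X}`. -/
def labE (X : Set V) : Set A := {a | ∃ e, Λ.lab e = a ∧ Λ.src e ∈ X}

/-- The set `E⁰_sink` of sinks. -/
def sinks : Set V := {v | ∀ e, Λ.src e ≠ v}

/-- The filter in `E(S)` associated with a pair (word, complete family). -/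
def pairFilter (_Λ : LblSp V Ed A) (α : Word A) (F : ℕ → Set (Set V)) : Set (Tr V A) :=
  {t | ∃ (n : ℕ) (B : Set V), (n : ℕ∞) ≤ wlength α ∧ B ∈ F n ∧
    t = Tr.mk (wprefix α n) B (wprefix α n)}

/-- A complete family for the word `α`: `F n` is a filter in `𝒜^{α_{1,n}}` for
`1 ≤ n ≤ |α|` (`F 0` is a filter in `𝒜` or empty, and a filter if `α = ω`), and
`F n = {X ∈ 𝒜^{α_{1,n}} : r(X, α_{n+1}) ∈ F (n+1)}` for all `n < |α|`. -/
noncomputable def IsCompleteFamily (α : Word A) (F : ℕ → Set (Set V)) : Prop :=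
  Λ.IsWordW α ∧
  (∀ n : ℕ, 1 ≤ n → (n : ℕ∞) ≤ wlength α → Λ.IsFilterAset (wprefix α n) (F n)) ∧
  (F 0 = ∅ ∨ Λ.IsFilterAset [] (F 0)) ∧
  (wlength α = 0 → Λ.IsFilterAset [] (F 0)) ∧
  (∀ n : ℕ, ((n + 1 : ℕ) : ℕ∞) ≤ wlength α →
    F n = {X | X ∈ Λ.Aset (wprefix α n) ∧
      Λ.relRange X ((wprefix α (n + 1)).drop n) ∈ F (n + 1)})

/-! ## The tight filter space `T` and the groupoid `Γ` as types -/

/-- The space `T` of tight filters. -/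
structure TightT where
  carrier : Set (Tr V A)
  tight : Λ.IsTightFilter carrier

/-- The topology of `T`, induced from pointwise convergence of characters. -/
noncomputable instance : TopologicalSpace Λ.TightT :=
  TopologicalSpace.induced (fun ξ => Λ.charOf ξ.carrier) inferInstance

/-- The groupoid `Γ ⊆ T × ℤ × T` as a type. -/
structure GammaT where
  fst : Λ.TightT
  mid : ℤ
  lst : Λ.TightT
  mem : Λ.InGamma fst.carrier mid lst.carrier

/-- The raw triple underlying an element of `Γ`. -/
def rawOf (p : Λ.GammaT) : Set (Tr V A) × ℤ × Set (Tr V A) :=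
  (p.fst.carrier, p.mid, p.lst.carrier)

/-- The collection of all sets `Z_{s,e:e₁,…,eₙ}` (for `s ∈ S`, `e, eᵢ ∈ E(S)`),
as subsets of `Γ`. -/
noncomputable def ZBasisT : Set (Set Λ.GammaT) :=
  {Z | ∃ (μ : List A) (X : Set V) (ν : List A) (e : Tr V A) (es : List (Tr V A)),
    Tr.mk μ X ν ∈ Λ.SSet ∧ e ∈ Λ.ESet ∧ (∀ f ∈ es, f ∈ Λ.ESet) ∧
    Z = {p : Λ.GammaT | Λ.rawOf p ∈ Λ.ZrawGen μ ν e es}}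

/-- The topology on `Γ` induced by the isomorphism `Φ` from the germ topology of
`𝒢_tight`, generated by the images of the basic sets `Θ(s, 𝒰)` with `𝒰 ⊆ D_{s*s}`
open in the tight spectrum. -/
noncomputable def PhiTopology : TopologicalSpace Λ.GammaT :=
  TopologicalSpace.generateFrom
    {Z | ∃ (s : Tr V A) (U : Set (Tr V A → Bool)), s ∈ Λ.SSet ∧
      (∃ W, IsOpen W ∧ U = W ∩ Λ.tightSpectrum) ∧
      (∀ φ ∈ U, φ (Λ.tmul (Tr.tstar s) s) = true) ∧
      Z = {p : Λ.GammaT | ∃ φ ∈ U, (s, φ) ∈ Λ.Omega ∧ Λ.PhiRaw s φ = Λ.rawOf p}}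

end LblSp

namespace LblSp

variable {V : Type u} {Ed : Type v} {A : Type w} (Λ : LblSp V Ed A)

lemma relRange_nil (X : Set V) : Λ.relRange X [] = X := if_pos rfl

lemma tmul_mk (α β γ δ : List A) (X Y : Set V) :
    Λ.tmul (Tr.mk α X β) (Tr.mk γ Y δ) =
      if β <+: γ ∧ (Λ.relRange X (γ.drop β.length) ∩ Y).Nonempty then
        Tr.mk (α ++ γ.drop β.length) (Λ.relRange X (γ.drop β.length) ∩ Y) δ
      else if γ <+: β ∧ (X ∩ Λ.relRange Y (β.drop γ.length)).Nonempty then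
        Tr.mk α (X ∩ Λ.relRange Y (β.drop γ.length)) (δ ++ β.drop γ.length)
      else Tr.zero := rfl

lemma tmul_star (μ ν : List A) (X : Set V) (hX : X.Nonempty) :
    Λ.tmul (Tr.mk ν X μ) (Tr.mk μ X ν) = Tr.mk ν X ν := by
  rw [tmul_mk, if_pos ⟨List.prefix_refl μ,
    by simp [List.drop_length, relRange_nil, hX]⟩]
  simp [List.drop_length, relRange_nil]

/-- Let `s = (μ, X, ν)` and `t = (β, Y, γ)` be nonzero elements of `S`
and `φ` a tight character. If `(s, φ), (t, φ) ∈ Ω` and `γ = νγ'`, then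
`(s, φ) ∼ (t, φ)` iff `β = μγ'`. -/
theorem statement_8 (hΛ : Λ.IsNormal) (μ ν β γ γ' : List A) (X Y : Set V)
    (φ : Tr V A → Bool) (hφ : φ ∈ Λ.tightSpectrum)
    (hsΩ : (Tr.mk μ X ν, φ) ∈ Λ.Omega) (htΩ : (Tr.mk β Y γ, φ) ∈ Λ.Omega)
    (hγ : γ = ν ++ γ') :
    Λ.germEquiv (Tr.mk μ X ν, φ) (Tr.mk β Y γ, φ) ↔ β = μ ++ γ' := by
  subst hγ
  obtain ⟨hsS, -, hsφ0⟩ := hsΩ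
  obtain ⟨htS, -, htφ0⟩ := htΩ
  obtain ⟨⟨-, hout, hzero, hmulφ⟩, -⟩ := hφ
  -- extract data of s
  rcases hsS with h0 | ⟨μ, X, ν, heq, hμL, hνL, hXμ, hXν, hXne⟩
  · exact absurd h0 (by simp)
  obtain ⟨rfl, rfl, rfl⟩ := Tr.mk.inj heq
  -- extract data of t
  rcases htS with h0 | ⟨β, Y, β₂, heq2, hβL, hγL, hYβ, hYγ, hYne⟩
  · exact absurd h0 (by simp)
  obtain ⟨rfl, rfl, rfl⟩ := Tr.mk.inj heq2
  -- φ values on the idempotents s*s and t*t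
  have hsφ : φ (Λ.tmul (Tr.mk ν X μ) (Tr.mk μ X ν)) = true := hsφ0
  rw [Λ.tmul_star μ ν X hXne] at hsφ
  have htφ : φ (Λ.tmul (Tr.mk (ν ++ γ') Y β) (Tr.mk β Y (ν ++ γ'))) = true := htφ0
  rw [Λ.tmul_star β (ν ++ γ') Y hYne] at htφ
  have hνE : Tr.mk ν X ν ∈ Λ.ESet := Or.inr ⟨ν, X, rfl, hνL, hXν, hXne⟩
  have hγE : Tr.mk (ν ++ γ') Y (ν ++ γ') ∈ Λ.ESet :=
    Or.inr ⟨ν ++ γ', Y, rfl, hγL, hYγ, hYne⟩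
  constructor
  · intro h
    obtain ⟨-, e, heE, hφe0, hmeq0⟩ := h
    have hφe : φ e = true := hφe0
    have heE' := heE
    rcases heE with rfl | ⟨δ, C, rfl, hδL, hCδ, hCne⟩
    · simp [hzero] at hφe
    have hmeq : Λ.tmul (Tr.mk μ X ν) (Tr.mk δ C δ)
        = Λ.tmul (Tr.mk β Y (ν ++ γ')) (Tr.mk δ C δ) := hmeq0
    have hφprod : φ (Λ.tmul (Tr.mk ν X ν) (Tr.mk δ C δ)) = true := by
      rw [hmulφ _ hνE _ heE', hsφ, hφe]
      rfl
    have hnz : (ν <+: δ ∧ (Λ.relRange X (δ.drop ν.length) ∩ C).Nonempty) ∨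
        (δ <+: ν ∧ (X ∩ Λ.relRange C (ν.drop δ.length)).Nonempty) := by
      by_contra hcon
      have hz : Λ.tmul (Tr.mk ν X ν) (Tr.mk δ C δ) = Tr.zero := by
        rw [tmul_mk, if_neg (fun h => hcon (Or.inl h)),
          if_neg (fun h => hcon (Or.inr h))]
      rw [hz, hzero] at hφprod
      simp at hφprod
    by_cases h1 : ν <+: δ ∧ (Λ.relRange X (δ.drop ν.length) ∩ C).Nonempty
    · have hs : Λ.tmul (Tr.mk μ X ν) (Tr.mk δ C δ)
          = Tr.mk (μ ++ δ.drop ν.length) (Λ.relRange X (δ.drop ν.length) ∩ C) δ := by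
        rw [tmul_mk, if_pos h1]
      by_cases d1 : (ν ++ γ') <+: δ ∧
          (Λ.relRange Y (δ.drop (ν ++ γ').length) ∩ C).Nonempty
      · have ht : Λ.tmul (Tr.mk β Y (ν ++ γ')) (Tr.mk δ C δ)
            = Tr.mk (β ++ δ.drop (ν ++ γ').length)
                (Λ.relRange Y (δ.drop (ν ++ γ').length) ∩ C) δ := by
          rw [tmul_mk, if_pos d1]
        rw [hs, ht] at hmeq
        obtain ⟨δ'', rfl⟩ := d1.1
        obtain ⟨h₁, -, -⟩ := Tr.mk.inj hmeq
        have e1 : ((ν ++ γ') ++ δ'').drop ν.length = γ' ++ δ'' := by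
          rw [List.append_assoc]; exact List.drop_left
        have e2 : ((ν ++ γ') ++ δ'').drop (ν ++ γ').length = δ'' := List.drop_left
        rw [e1, e2, ← List.append_assoc] at h₁
        exact (List.append_cancel_right h₁).symm
      · by_cases d2 : δ <+: (ν ++ γ') ∧
            (Y ∩ Λ.relRange C ((ν ++ γ').drop δ.length)).Nonempty
        · have ht : Λ.tmul (Tr.mk β Y (ν ++ γ')) (Tr.mk δ C δ)
              = Tr.mk β (Y ∩ Λ.relRange C ((ν ++ γ').drop δ.length))
                  (δ ++ (ν ++ γ').drop δ.length) := by
            rw [tmul_mk, if_neg d1, if_pos d2]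
          rw [hs, ht] at hmeq
          obtain ⟨h₁, -, h₃⟩ := Tr.mk.inj hmeq
          have hw : (ν ++ γ').drop δ.length = [] := by simpa using h₃.symm
          have hlen : (ν ++ γ').length ≤ δ.length := by
            simpa using List.drop_eq_nil_iff.mp hw
          have hδeq : δ = ν ++ γ' :=
            d2.1.eq_of_length (le_antisymm d2.1.length_le hlen)
          subst hδeq
          rw [List.drop_left] at h₁
          exact h₁.symm
        · have ht : Λ.tmul (Tr.mk β Y (ν ++ γ')) (Tr.mk δ C δ) = Tr.zero := by
            rw [tmul_mk, if_neg d1, if_neg d2]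
          rw [hs, ht] at hmeq
          exact absurd hmeq (by simp)
    · have h2 := hnz.resolve_left h1
      obtain ⟨w, rfl⟩ := h2.1
      have hs : Λ.tmul (Tr.mk μ X (δ ++ w)) (Tr.mk δ C δ)
          = Tr.mk μ (X ∩ Λ.relRange C ((δ ++ w).drop δ.length)) (δ ++ w) := by
        rw [tmul_mk, if_neg h1, if_pos h2]
        rw [List.drop_left]
      by_cases d1 : ((δ ++ w) ++ γ') <+: δ ∧
          (Λ.relRange Y (δ.drop ((δ ++ w) ++ γ').length) ∩ C).Nonempty
      · have ht : Λ.tmul (Tr.mk β Y ((δ ++ w) ++ γ')) (Tr.mk δ C δ)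
            = Tr.mk (β ++ δ.drop ((δ ++ w) ++ γ').length)
                (Λ.relRange Y (δ.drop ((δ ++ w) ++ γ').length) ∩ C) δ := by
          rw [tmul_mk, if_pos d1]
        rw [hs, ht] at hmeq
        obtain ⟨h₁, -, h₃⟩ := Tr.mk.inj hmeq
        have hw : w = [] := by simpa using h₃
        subst hw
        have hγ' : γ' = [] := by
          have hl := d1.1.length_le
          simp only [List.append_nil, List.length_append] at hl
          exact List.eq_nil_of_length_eq_zero (by omega)
        subst hγ'
        simp only [List.append_nil, List.drop_length] at h₁ ⊢
        exact h₁.symm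
      · by_cases d2 : δ <+: ((δ ++ w) ++ γ') ∧
            (Y ∩ Λ.relRange C (((δ ++ w) ++ γ').drop δ.length)).Nonempty
        · have ht : Λ.tmul (Tr.mk β Y ((δ ++ w) ++ γ')) (Tr.mk δ C δ)
              = Tr.mk β (Y ∩ Λ.relRange C (((δ ++ w) ++ γ').drop δ.length))
                  (δ ++ ((δ ++ w) ++ γ').drop δ.length) := by
            rw [tmul_mk, if_neg d1, if_pos d2]
          rw [hs, ht] at hmeq
          obtain ⟨h₁, -, h₃⟩ := Tr.mk.inj hmeq
          have e3 : ((δ ++ w) ++ γ').drop δ.length = w ++ γ' := by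
            rw [List.append_assoc]; exact List.drop_left
          rw [e3] at h₃
          have h4 : w = w ++ γ' := List.append_cancel_left h₃
          have hγ' : γ' = [] := by simpa using h4.symm
          subst hγ'
          rw [List.append_nil]
          exact h₁.symm
        · have ht : Λ.tmul (Tr.mk β Y ((δ ++ w) ++ γ')) (Tr.mk δ C δ) = Tr.zero := by
            rw [tmul_mk, if_neg d1, if_neg d2]
          rw [hs, ht] at hmeq
          exact absurd hmeq (by simp)
  · rintro rfl
    refine ⟨rfl, ?_⟩
    have hφe : φ (Λ.tmul (Tr.mk ν X ν) (Tr.mk (ν ++ γ') Y (ν ++ γ'))) = true := by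
      rw [hmulφ _ hνE _ hγE, hsφ, htφ]
      rfl
    have hD : (Λ.relRange X γ' ∩ Y).Nonempty := by
      by_contra hcon
      have hc1 : ¬ (ν <+: ν ++ γ' ∧
          (Λ.relRange X ((ν ++ γ').drop ν.length) ∩ Y).Nonempty) := by
        rw [List.drop_left]; exact fun h => hcon h.2
      by_cases hc2 : (ν ++ γ') <+: ν ∧
          (X ∩ Λ.relRange Y (ν.drop (ν ++ γ').length)).Nonempty
      · have hγ' : γ' = [] := by
          have := hc2.1.length_le
          simp only [List.length_append] at this
          exact List.eq_nil_of_length_eq_zero (by omega)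
        subst hγ'
        apply hcon
        have h2' := hc2.2
        rw [List.append_nil, List.drop_length, relRange_nil] at h2'
        rw [relRange_nil]
        exact h2'
      · have hz : Λ.tmul (Tr.mk ν X ν) (Tr.mk (ν ++ γ') Y (ν ++ γ')) = Tr.zero := by
          rw [tmul_mk, if_neg hc1, if_neg hc2]
        rw [hz, hzero] at hφe
        simp at hφe
    have he : Λ.tmul (Tr.mk ν X ν) (Tr.mk (ν ++ γ') Y (ν ++ γ'))
        = Tr.mk (ν ++ γ') (Λ.relRange X γ' ∩ Y) (ν ++ γ') := by
      rw [tmul_mk, if_pos ⟨List.prefix_append _ _, by rw [List.drop_left]; exact hD⟩]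
      rw [List.drop_left]
    rw [he] at hφe
    have heE : Tr.mk (ν ++ γ') (Λ.relRange X γ' ∩ Y) (ν ++ γ') ∈ Λ.ESet := by
      by_contra hE
      rw [hout _ hE] at hφe
      simp at hφe
    refine ⟨Tr.mk (ν ++ γ') (Λ.relRange X γ' ∩ Y) (ν ++ γ'), heE, hφe, ?_⟩
    have hD' : (Λ.relRange X γ' ∩ (Λ.relRange X γ' ∩ Y)).Nonempty := by
      rwa [← Set.inter_assoc, Set.inter_self]
    have hYD : Y ∩ (Λ.relRange X γ' ∩ Y) = Λ.relRange X γ' ∩ Y := by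
      ext v; constructor
      · exact fun hv => hv.2
      · exact fun hv => ⟨hv.2, hv⟩
    show Λ.tmul (Tr.mk μ X ν) _ = Λ.tmul (Tr.mk (μ ++ γ') Y (ν ++ γ')) _
    have hs : Λ.tmul (Tr.mk μ X ν)
        (Tr.mk (ν ++ γ') (Λ.relRange X γ' ∩ Y) (ν ++ γ'))
        = Tr.mk (μ ++ γ') (Λ.relRange X γ' ∩ Y) (ν ++ γ') := by
      rw [tmul_mk, if_pos ⟨List.prefix_append _ _, by rw [List.drop_left]; exact hD'⟩]
      rw [List.drop_left, ← Set.inter_assoc, Set.inter_self]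
    have ht : Λ.tmul (Tr.mk (μ ++ γ') Y (ν ++ γ'))
        (Tr.mk (ν ++ γ') (Λ.relRange X γ' ∩ Y) (ν ++ γ'))
        = Tr.mk (μ ++ γ') (Λ.relRange X γ' ∩ Y) (ν ++ γ') := by
      rw [tmul_mk, if_pos ⟨List.prefix_refl _, by
        rw [List.drop_length, relRange_nil, hYD]; exact hD⟩]
      rw [List.drop_length, relRange_nil, hYD, List.append_nil]
    rw [hs, ht]


end LblSp
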